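/- An (abstract) group that is covered by finitely many cyclic subgroups is either cyclic or finite. -/

import Mathlib

open Subgroup
open scoped Pointwise
open scoped commutatorElement

/-- commutator is unchanged by multiplying the arguments by central elements. -/
theorem commutatorElement_mul_center {M : Type*} [Group M] (a b z w : M)
    (hz : z ∈ Subgroup.center M) (hw : w ∈ Subgroup.center M) :
    ⁅a * z, b * w⁆ = ⁅a, b⁆ := by
  rw [Subgroup.mem_center_iff] at hz hw
  have h1 : ⁅a * z, b * w⁆ = a * (z * (b * w) * z⁻¹) * a⁻¹ * (b * w)⁻¹ := by
    simp only [commutatorElement_def]; group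
  have h2 : z * (b * w) * z⁻¹ = b * w := by rw [← hz (b * w)]; group
  have h3 : a * (b * w) * a⁻¹ * (b * w)⁻¹ = a * b * (w * a⁻¹ * w⁻¹) * b⁻¹ := by group
  have h4 : w * a⁻¹ * w⁻¹ = a⁻¹ := by rw [← hw a⁻¹]; group
  rw [h1, h2, h3, h4, commutatorElement_def]

/-- Schur-type input: if the center has finite index, the set of commutators is finite. -/
theorem finite_commutatorSet_of_finiteIndex_center (M : Type*) [Group M]
    [(Subgroup.center M).FiniteIndex] : Finite (commutatorSet M) := by
  have : Finite (M ⧸ Subgroup.center M) := inferInstance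
  have key : commutatorSet M ⊆ Set.range
      (fun p : (M ⧸ Subgroup.center M) × (M ⧸ Subgroup.center M) =>
        ⁅p.1.out, p.2.out⁆) := by
    rintro - ⟨a, b, rfl⟩
    refine ⟨(QuotientGroup.mk a, QuotientGroup.mk b), ?_⟩
    obtain ⟨⟨z, hz⟩, hz'⟩ := QuotientGroup.mk_out_eq_mul (Subgroup.center M) a
    obtain ⟨⟨w, hw⟩, hw'⟩ := QuotientGroup.mk_out_eq_mul (Subgroup.center M) b
    simp only [hz', hw']
    exact commutatorElement_mul_center a b z w hz hw
  exact (Set.Finite.subset (Set.finite_range _) key).to_subtype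

open Subgroup
open scoped Pointwise

/-- In an infinite cyclic subgroup every nontrivial element has infinite order. -/
theorem orderOf_eq_zero_of_mem_infinite_cyclic {G : Type*} [Group G] {K : Subgroup G}
    [Infinite K] (hK : IsCyclic K) {x : G} (hx : x ∈ K) (hx1 : x ≠ 1) :
    orderOf x = 0 := by
  obtain ⟨g, hg⟩ := hK.exists_generator
  have hgo : orderOf g = 0 := Infinite.orderOf_eq_zero_of_forall_mem_zpowers hg
  obtain ⟨k, hk⟩ := Subgroup.mem_zpowers_iff.mp (hg ⟨x, hx⟩)
  by_contra hn
  have h1 : (g ^ k) ^ orderOf x = 1 := by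
    rw [hk, ← Subgroup.orderOf_mk x hx]; exact pow_orderOf_eq_one _
  rw [← zpow_natCast, ← zpow_mul] at h1
  have h2 := zpow_eq_one_iff_modEq.mp h1
  rw [hgo] at h2
  have h3 : k * (orderOf x : ℤ) = 0 := by
    simpa [Int.ModEq] using h2
  have hk0 : k = 0 := by
    rcases mul_eq_zero.mp h3 with h | h
    · exact h
    · exact absurd (Nat.cast_eq_zero.mp h) hn
  rw [hk0, zpow_zero] at hk
  exact hx1 (by simpa using congrArg Subtype.val hk.symm)

/-- Elements of a cyclic subgroup commute. -/
theorem mul_comm_of_mem_isCyclic {G : Type*} [Group G] {K : Subgroup G} (hK : IsCyclic K)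
    {a b : G} (ha : a ∈ K) (hb : b ∈ K) : a * b = b * a := by
  letI : CommGroup K := IsCyclic.commGroup
  exact congrArg Subtype.val (mul_comm (⟨a, ha⟩ : K) (⟨b, hb⟩ : K))

open Subgroup
open scoped Pointwise

/-- Baer: a group covered by finitely many cyclic subgroups is either cyclic
or finite. -/
theorem cyclic_or_finite_of_finite_cyclic_cover {G : Type*} [Group G]
    (S : Finset (Subgroup G)) (hcyc : ∀ H ∈ S, IsCyclic H)
    (hcov : ∀ x : G, ∃ H ∈ S, x ∈ H) :
    IsCyclic G ∨ Finite G := by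
  classical
  rcases finite_or_infinite G with hfin | hinf
  · exact Or.inr hfin
  refine Or.inl ?_
  -- the subgroups cover `G` as "cosets"
  have hcovers : ⋃ i ∈ S, (fun _ : Subgroup G => (1 : G)) i • ((id i : Subgroup G) : Set G)
      = Set.univ := by
    ext x
    simp only [Set.mem_iUnion, Set.mem_univ, iff_true, one_smul, id_eq, SetLike.mem_coe]
    obtain ⟨H, hH, hxH⟩ := hcov x
    exact ⟨H, hH, hxH⟩
  have hcov' := Subgroup.leftCoset_cover_filter_FiniteIndex
    (H := id) (g := fun _ : Subgroup G => (1 : G)) (s := S) hcovers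
  -- every element lies in a cyclic subgroup of finite index
  have key : ∀ x : G, ∃ K : Subgroup G, x ∈ K ∧ K.FiniteIndex ∧ IsCyclic K := by
    intro x
    have hx : x ∈ ⋃ k ∈ S.filter (fun i => (id i : Subgroup G).FiniteIndex),
        (fun _ : Subgroup G => (1 : G)) k • ((id k : Subgroup G) : Set G) := by
      rw [hcov']; exact Set.mem_univ x
    simp only [Set.mem_iUnion, one_smul, id_eq, SetLike.mem_coe, Finset.mem_filter] at hx
    obtain ⟨K, ⟨hKS, hKfi⟩, hxK⟩ := hx
    exact ⟨K, hxK, hKfi, hcyc K hKS⟩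
  -- finite-index subgroups of G are infinite
  have hinfK : ∀ K : Subgroup G, K.FiniteIndex → Infinite K := by
    intro K hKfi
    by_contra h
    rw [not_infinite_iff_finite] at h
    haveI := h
    have h1 : Nat.card K * K.index = Nat.card G := Subgroup.card_mul_index K
    have : Finite G := by
      apply Nat.finite_of_card_ne_zero
      rw [← h1]
      exact Nat.mul_ne_zero Nat.card_pos.ne' hKfi.index_ne_zero
    exact this.not_infinite hinf
  -- G is torsion-free
  have htf : ∀ x : G, x ≠ 1 → orderOf x = 0 := by
    intro x hx1
    obtain ⟨K, hxK, hKfi, hKcyc⟩ := key x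
    haveI := hinfK K hKfi
    exact orderOf_eq_zero_of_mem_infinite_cyclic hKcyc hxK hx1
  -- G is commutative
  have hab : ∀ x y : G, x * y = y * x := by
    intro x y
    obtain ⟨K, hxK, hKfi, hKcyc⟩ := key x
    obtain ⟨K', hyK', hK'fi, hK'cyc⟩ := key y
    haveI := hKfi; haveI := hK'fi
    set L := K ⊓ K' with hL
    haveI : L.FiniteIndex := inferInstance
    set C := Subgroup.centralizer (L : Set G) with hC
    have hxC : x ∈ C := by
      rw [Subgroup.mem_centralizer_iff]
      intro h hh
      exact mul_comm_of_mem_isCyclic hKcyc (hh.1 : h ∈ K) hxK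
    have hyC : y ∈ C := by
      rw [Subgroup.mem_centralizer_iff]
      intro h hh
      exact mul_comm_of_mem_isCyclic hK'cyc (hh.2 : h ∈ K') hyK'
    have hle : L.subgroupOf C ≤ Subgroup.center C := by
      rintro ⟨z, hzC⟩ hz
      rw [Subgroup.mem_subgroupOf] at hz
      rw [Subgroup.mem_center_iff]
      rintro ⟨g, hgC⟩
      exact Subtype.ext ((Subgroup.mem_centralizer_iff.mp hgC z hz).symm)
    haveI : (L.subgroupOf C).FiniteIndex := inferInstance
    haveI : (Subgroup.center C).FiniteIndex := Subgroup.finiteIndex_of_le hle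
    haveI : Finite (commutatorSet C) := finite_commutatorSet_of_finiteIndex_center C
    haveI : Finite (_root_.commutator C) := inferInstance
    set x' : C := ⟨x, hxC⟩
    set y' : C := ⟨y, hyC⟩
    have hzmem : ⁅x', y'⁆ ∈ _root_.commutator C := by
      rw [_root_.commutator]
      exact Subgroup.commutator_mem_commutator (Subgroup.mem_top _) (Subgroup.mem_top _)
    have hord : orderOf (⁅x', y'⁆ : C) ≠ 0 := by
      rw [← Subgroup.orderOf_mk _ hzmem]
      exact (orderOf_pos _).ne'
    have hord' : orderOf ((⁅x', y'⁆ : C) : G) ≠ 0 := by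
      rwa [Subgroup.orderOf_coe]
    have h1 : ((⁅x', y'⁆ : C) : G) = 1 := by
      by_contra h
      exact hord' (htf _ h)
    have h2 : ⁅x', y'⁆ = (1 : C) := by
      exact Subtype.ext h1
    have h3 := commutatorElement_eq_one_iff_mul_comm.mp h2
    exact congrArg Subtype.val h3
  letI : CommGroup G := { (inferInstance : Group G) with mul_comm := hab }
  -- a cyclic finite-index subgroup, with generator a
  obtain ⟨K, -, hKfi, hKcyc⟩ := key 1
  haveI := hKfi
  obtain ⟨gK, hgK⟩ := hKcyc.exists_generator
  set a : G := (gK : G) with ha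
  have hKle : K ≤ Subgroup.zpowers a := by
    intro u hu
    obtain ⟨k, hk⟩ := Subgroup.mem_zpowers_iff.mp (hgK ⟨u, hu⟩)
    exact Subgroup.mem_zpowers_iff.mpr ⟨k, by simpa using congrArg Subtype.val hk⟩
  haveI : (Subgroup.zpowers a).FiniteIndex := Subgroup.finiteIndex_of_le hKle
  set n := (Subgroup.zpowers a).index with hn
  have hn0 : n ≠ 0 := Subgroup.FiniteIndex.index_ne_zero
  have hmem : ∀ g : G, g ^ n ∈ Subgroup.zpowers a := fun g =>
    Subgroup.pow_index_mem (Subgroup.zpowers a) g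
  set ψ : G →* Subgroup.zpowers a :=
    (powMonoidHom n : G →* G).codRestrict (Subgroup.zpowers a) hmem with hψ
  have hinj : Function.Injective ψ := by
    intro u v h
    have h' : u ^ n = v ^ n := congrArg Subtype.val h
    have h1 : (u * v⁻¹) ^ n = 1 := by
      rw [mul_pow, inv_pow, h', mul_inv_cancel]
    have h2 : u * v⁻¹ = 1 := by
      by_contra hne
      have := htf _ hne
      rw [orderOf_eq_zero_iff'] at this
      exact this n (Nat.pos_of_ne_zero hn0) h1
    rw [mul_inv_eq_one] at h2
    exact h2
  haveI : IsCyclic (Subgroup.zpowers a) := by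
    refine ⟨⟨⟨a, Subgroup.mem_zpowers a⟩, ?_⟩⟩
    rintro ⟨u, hu⟩
    obtain ⟨k, hk⟩ := Subgroup.mem_zpowers_iff.mp hu
    exact Subgroup.mem_zpowers_iff.mpr ⟨k, Subtype.ext (by simpa using hk)⟩
  haveI : IsCyclic ψ.range := Subgroup.isCyclic _
  exact isCyclic_of_surjective (MonoidHom.ofInjective hinj).symm
    (MulEquiv.surjective _)
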